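/- Let m and n be positive integers, let U, V, U_0, …, U_{n-1}, V_0, …, V_{n-1} be lattice terms in m variables, and let R be a lattice term in n variables. Suppose that in every lattice M and for all tuples x⃗, y⃗ ∈ M^m, the inequality U(x⃗) ∧ V(y⃗) ≤ R(U_0(x⃗)∧V_0(y⃗), …, U_{n-1}(x⃗)∧V_{n-1}(y⃗)) holds. Then there exists a nonempty subset J ⊆ {0, …, n-1} such that (a) in every lattice and for every assignment of the n variables, the evaluation of the pure meet term ⋀_{j∈J} x_j is below the evaluation of R, and (b) in every lattice M and for all x⃗, y⃗ ∈ M^m, U(x⃗) ∧ V(y⃗) ≤ ⋀_{j∈J} (U_j(x⃗) ∧ V_j(y⃗)). -/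
import Mathlib
universe u

inductive LatTerm (n : ℕ) : Type
  | var : Fin n → LatTerm n
  | meet : LatTerm n → LatTerm n → LatTerm n
  | join : LatTerm n → LatTerm n → LatTerm n

namespace LatTerm

def eval {n : ℕ} {M : Type u} [Lattice M] (v : Fin n → M) : LatTerm n → M
  | var i => v i
  | meet s t => eval v s ⊓ eval v t
  | join s t => eval v s ⊔ eval v t

def dual {n : ℕ} : LatTerm n → LatTerm n
  | var i => var i
  | meet s t => join (dual s) (dual t)
  | join s t => meet (dual s) (dual t)

theorem eval_map {k : ℕ} {M N : Type*} [Lattice M] [Lattice N] (f : M → N)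
    (hinf : ∀ a b, f (a ⊓ b) = f a ⊓ f b) (hsup : ∀ a b, f (a ⊔ b) = f a ⊔ f b)
    (v : Fin k → M) : ∀ T : LatTerm k, f (T.eval v) = T.eval (fun i => f (v i))
  | .var i => rfl
  | .meet s t => by
      simp only [eval, hinf, eval_map f hinf hsup v s, eval_map f hinf hsup v t]
  | .join s t => by
      simp only [eval, hsup, eval_map f hinf hsup v s, eval_map f hinf hsup v t]

theorem eval_const {k : ℕ} {M : Type*} [Lattice M] (c : M) :
    ∀ T : LatTerm k, T.eval (fun _ => c) = c
  | .var i => rfl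
  | .meet s t => by simp only [eval, eval_const c s, eval_const c t, inf_idem]
  | .join s t => by simp only [eval, eval_const c s, eval_const c t, sup_idem]

theorem eval_c_map {m n : ℕ} {M N : Type*} [Lattice M] [Lattice N] (f : M → N)
    (hinf : ∀ a b, f (a ⊓ b) = f a ⊓ f b) (hsup : ∀ a b, f (a ⊔ b) = f a ⊔ f b)
    (Us Vs : Fin n → LatTerm m) (x y : Fin m → M) (R : LatTerm n) :
    f (R.eval fun j => (Us j).eval x ⊓ (Vs j).eval y)
      = R.eval fun j => (Us j).eval (fun i => f (x i)) ⊓ (Vs j).eval (fun i => f (y i)) := by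
  rw [eval_map f hinf hsup _ R]
  congr 1
  funext j
  rw [hinf, eval_map f hinf hsup x (Us j), eval_map f hinf hsup y (Vs j)]

end LatTerm

def InI {M : Type u} [Lattice M] (w t z : M) : Prop := w ≤ z ∧ z ≤ t

def Dbl (M : Type u) [Lattice M] (w t : M) : Type u :=
  {p : M × Prop // p.2 → InI w t p.1}

namespace Dbl
variable {M : Type u} [Lattice M] {w t : M}

instance : Lattice (Dbl M w t) where
  le p q := p.1.1 ≤ q.1.1 ∧ (InI w t p.1.1 → InI w t q.1.1 → p.1.2 → q.1.2)
  le_refl p := ⟨le_refl _, fun _ _ h => h⟩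
  le_trans p q r hpq hqr := by
    refine ⟨hpq.1.trans hqr.1, fun h1 h3 hp => ?_⟩
    have h2 : InI w t q.1.1 := ⟨h1.1.trans hpq.1, hqr.1.trans h3.2⟩
    exact hqr.2 h2 h3 (hpq.2 h1 h2 hp)
  le_antisymm p q hpq hqp := by
    have hz : p.1.1 = q.1.1 := le_antisymm hpq.1 hqp.1
    refine Subtype.ext (Prod.ext hz (propext ⟨fun hp => ?_, fun hq => ?_⟩))
    · have hI : InI w t p.1.1 := p.2 hp
      exact hpq.2 hI (hz ▸ hI) hp
    · have hI : InI w t q.1.1 := q.2 hq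
      exact hqp.2 hI (hz ▸ hI) hq
  inf p q := ⟨(p.1.1 ⊓ q.1.1,
      InI w t (p.1.1 ⊓ q.1.1) ∧ (InI w t p.1.1 → p.1.2) ∧ (InI w t q.1.1 → q.1.2)),
      fun h => h.1⟩
  inf_le_left p q := ⟨inf_le_left, fun _ h1 hl => hl.2.1 h1⟩
  inf_le_right p q := ⟨inf_le_right, fun _ h2 hl => hl.2.2 h2⟩
  le_inf r p q hrp hrq := by
    refine ⟨le_inf hrp.1 hrq.1, fun hr hm hr2 => ⟨hm, fun h1 => ?_, fun h2 => ?_⟩⟩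
    · exact hrp.2 hr h1 hr2
    · exact hrq.2 hr h2 hr2
  sup p q := ⟨(p.1.1 ⊔ q.1.1,
      InI w t (p.1.1 ⊔ q.1.1) ∧ ((InI w t p.1.1 ∧ p.1.2) ∨ (InI w t q.1.1 ∧ q.1.2))),
      fun h => h.1⟩
  le_sup_left p q := ⟨le_sup_left, fun h1 hm hp => ⟨hm, Or.inl ⟨h1, hp⟩⟩⟩
  le_sup_right p q := ⟨le_sup_right, fun h2 hm hq => ⟨hm, Or.inr ⟨h2, hq⟩⟩⟩
  sup_le p q r hpr hqr := by
    refine ⟨sup_le hpr.1 hqr.1, fun hm hr hl => ?_⟩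
    rcases hl.2 with ⟨h1, hp⟩ | ⟨h2, hq⟩
    · exact hpr.2 h1 hr hp
    · exact hqr.2 h2 hr hq

theorem le_def (p q : Dbl M w t) :
    p ≤ q ↔ p.1.1 ≤ q.1.1 ∧ (InI w t p.1.1 → InI w t q.1.1 → p.1.2 → q.1.2) := Iff.rfl

theorem fst_inf (p q : Dbl M w t) : (p ⊓ q).1.1 = p.1.1 ⊓ q.1.1 := rfl
theorem fst_sup (p q : Dbl M w t) : (p ⊔ q).1.1 = p.1.1 ⊔ q.1.1 := rfl
theorem snd_inf (p q : Dbl M w t) : (p ⊓ q).1.2 =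
    (InI w t (p.1.1 ⊓ q.1.1) ∧ (InI w t p.1.1 → p.1.2) ∧ (InI w t q.1.1 → q.1.2)) := rfl
theorem snd_sup (p q : Dbl M w t) : (p ⊔ q).1.2 =
    (InI w t (p.1.1 ⊔ q.1.1) ∧ ((InI w t p.1.1 ∧ p.1.2) ∨ (InI w t q.1.1 ∧ q.1.2))) := rfl

end Dbl

open LatTerm in
theorem join_split {m n : ℕ} (U V : LatTerm m) (Us Vs : Fin n → LatTerm m) (R₁ R₂ : LatTerm n)
    (h : ∀ (M : Type u) [Lattice M], ∀ x y : Fin m → M,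
      U.eval x ⊓ V.eval y ≤ R₁.eval (fun j => (Us j).eval x ⊓ (Vs j).eval y)
        ⊔ R₂.eval (fun j => (Us j).eval x ⊓ (Vs j).eval y)) :
    (∀ (M : Type u) [Lattice M], ∀ x y : Fin m → M,
      U.eval x ⊓ V.eval y ≤ R₁.eval (fun j => (Us j).eval x ⊓ (Vs j).eval y)) ∨
    (∀ (M : Type u) [Lattice M], ∀ x y : Fin m → M,
      U.eval x ⊓ V.eval y ≤ R₂.eval (fun j => (Us j).eval x ⊓ (Vs j).eval y)) := by
  by_contra hc
  push_neg at hc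
  obtain ⟨hc1, hc2⟩ := hc
  obtain ⟨M₁, _, x₁, y₁, h₁⟩ := hc1
  obtain ⟨M₂, _, x₂, y₂, h₂⟩ := hc2
  -- combined witness lattice
  let M : Type u := M₁ × M₂ × Prop × Prop
  let x : Fin m → M := fun i => (x₁ i, x₂ i, True, False)
  let y : Fin m → M := fun i => (y₁ i, y₂ i, False, True)
  let c : Fin n → M := fun j => (Us j).eval x ⊓ (Vs j).eval y
  let p : M := U.eval x
  let q : M := V.eval y
  let a : M := R₁.eval c
  let b : M := R₂.eval c
  let w : M := p ⊓ q
  let t : M := a ⊔ b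
  have hwt : w ≤ t := h M x y
  -- coordinate projections
  have f1inf : ∀ u v : M, (u ⊓ v).1 = u.1 ⊓ v.1 := fun _ _ => rfl
  have f1sup : ∀ u v : M, (u ⊔ v).1 = u.1 ⊔ v.1 := fun _ _ => rfl
  have f2inf : ∀ u v : M, (u ⊓ v).2.1 = u.2.1 ⊓ v.2.1 := fun _ _ => rfl
  have f2sup : ∀ u v : M, (u ⊔ v).2.1 = u.2.1 ⊔ v.2.1 := fun _ _ => rfl
  have f3inf : ∀ u v : M, (u ⊓ v).2.2.1 = u.2.2.1 ⊓ v.2.2.1 := fun _ _ => rfl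
  have f3sup : ∀ u v : M, (u ⊔ v).2.2.1 = u.2.2.1 ⊔ v.2.2.1 := fun _ _ => rfl
  have f4inf : ∀ u v : M, (u ⊓ v).2.2.2 = u.2.2.2 ⊓ v.2.2.2 := fun _ _ => rfl
  have f4sup : ∀ u v : M, (u ⊔ v).2.2.2 = u.2.2.2 ⊔ v.2.2.2 := fun _ _ => rfl
  have P1 : ∀ {k : ℕ} (T : LatTerm k) (v : Fin k → M),
      (T.eval v).1 = T.eval (fun i => (v i).1) :=
    fun T v => eval_map (fun u : M => u.1) f1inf f1sup v T
  have P2 : ∀ {k : ℕ} (T : LatTerm k) (v : Fin k → M),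
      (T.eval v).2.1 = T.eval (fun i => (v i).2.1) :=
    fun T v => eval_map (fun u : M => u.2.1) f2inf f2sup v T
  have P3 : ∀ {k : ℕ} (T : LatTerm k) (v : Fin k → M),
      (T.eval v).2.2.1 = T.eval (fun i => (v i).2.2.1) :=
    fun T v => eval_map (fun u : M => u.2.2.1) f3inf f3sup v T
  have P4 : ∀ {k : ℕ} (T : LatTerm k) (v : Fin k → M),
      (T.eval v).2.2.2 = T.eval (fun i => (v i).2.2.2) :=
    fun T v => eval_map (fun u : M => u.2.2.2) f4inf f4sup v T
  -- w ≰ a (via first coordinate)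
  have hwa : ¬ w ≤ a := by
    intro hle
    apply h₁
    have h1 : w.1 ≤ a.1 := hle.1
    have e1 : w.1 = U.eval x₁ ⊓ V.eval y₁ := by
      show (U.eval x ⊓ V.eval y).1 = _
      rw [f1inf, P1 U x, P1 V y]
    have e2 : a.1 = R₁.eval (fun j => (Us j).eval x₁ ⊓ (Vs j).eval y₁) :=
      eval_c_map (fun u : M => u.1) f1inf f1sup Us Vs x y R₁
    rwa [e1, e2] at h1
  have hwb : ¬ w ≤ b := by
    intro hle
    apply h₂
    have h1 : w.2.1 ≤ b.2.1 := hle.2.1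
    have e1 : w.2.1 = U.eval x₂ ⊓ V.eval y₂ := by
      show (U.eval x ⊓ V.eval y).2.1 = _
      rw [f2inf, P2 U x, P2 V y]
    have e2 : b.2.1 = R₂.eval (fun j => (Us j).eval x₂ ⊓ (Vs j).eval y₂) :=
      eval_c_map (fun u : M => u.2.1) f2inf f2sup Us Vs x y R₂
    rwa [e1, e2] at h1
  -- p ≰ t (via third coordinate)
  have hct3 : ∀ j, (c j).2.2.1 = (True ⊓ False : Prop) := by
    intro j
    show ((Us j).eval x ⊓ (Vs j).eval y).2.2.1 = _
    rw [f3inf, P3 (Us j) x, P3 (Vs j) y]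
    rw [show (fun i => (x i).2.2.1) = (fun _ : Fin m => (True : Prop)) from rfl,
      show (fun i => (y i).2.2.1) = (fun _ : Fin m => (False : Prop)) from rfl,
      eval_const, eval_const]
  have hpt : ¬ p ≤ t := by
    intro hle
    have h1 : p.2.2.1 ≤ t.2.2.1 := hle.2.2.1
    have e1 : p.2.2.1 = (True : Prop) := by
      show (U.eval x).2.2.1 = _
      rw [P3 U x,
        show (fun i => (x i).2.2.1) = (fun _ : Fin m => (True : Prop)) from rfl, eval_const]
    have e2 : t.2.2.1 = ((True ⊓ False) ⊔ (True ⊓ False) : Prop) := by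
      show (a ⊔ b).2.2.1 = _
      rw [f3sup]
      have ea : a.2.2.1 = (True ⊓ False : Prop) := by
        show (R₁.eval c).2.2.1 = _
        rw [P3 R₁ c, show (fun j => (c j).2.2.1) = (fun _ : Fin n => (True ⊓ False : Prop)) from
          funext hct3, eval_const]
      have eb : b.2.2.1 = (True ⊓ False : Prop) := by
        show (R₂.eval c).2.2.1 = _
        rw [P3 R₂ c, show (fun j => (c j).2.2.1) = (fun _ : Fin n => (True ⊓ False : Prop)) from
          funext hct3, eval_const]
      rw [ea, eb]
    rw [e1, e2] at h1
    rw [show ((True ⊓ False) ⊔ (True ⊓ False) : Prop) = False by simp] at h1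
    exact h1 trivial
  -- q ≰ t (via fourth coordinate)
  have hct4 : ∀ j, (c j).2.2.2 = (False ⊓ True : Prop) := by
    intro j
    show ((Us j).eval x ⊓ (Vs j).eval y).2.2.2 = _
    rw [f4inf, P4 (Us j) x, P4 (Vs j) y]
    rw [show (fun i => (x i).2.2.2) = (fun _ : Fin m => (False : Prop)) from rfl,
      show (fun i => (y i).2.2.2) = (fun _ : Fin m => (True : Prop)) from rfl,
      eval_const, eval_const]
  have hqt : ¬ q ≤ t := by
    intro hle
    have h1 : q.2.2.2 ≤ t.2.2.2 := hle.2.2.2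
    have e1 : q.2.2.2 = (True : Prop) := by
      show (V.eval y).2.2.2 = _
      rw [P4 V y,
        show (fun i => (y i).2.2.2) = (fun _ : Fin m => (True : Prop)) from rfl, eval_const]
    have e2 : t.2.2.2 = ((False ⊓ True) ⊔ (False ⊓ True) : Prop) := by
      show (a ⊔ b).2.2.2 = _
      rw [f4sup]
      have ea : a.2.2.2 = (False ⊓ True : Prop) := by
        show (R₁.eval c).2.2.2 = _
        rw [P4 R₁ c, show (fun j => (c j).2.2.2) = (fun _ : Fin n => (False ⊓ True : Prop)) from
          funext hct4, eval_const]
      have eb : b.2.2.2 = (False ⊓ True : Prop) := by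
        show (R₂.eval c).2.2.2 = _
        rw [P4 R₂ c, show (fun j => (c j).2.2.2) = (fun _ : Fin n => (False ⊓ True : Prop)) from
          funext hct4, eval_const]
      rw [ea, eb]
    rw [e1, e2] at h1
    rw [show ((False ⊓ True) ⊔ (False ⊓ True) : Prop) = False by simp] at h1
    exact h1 trivial
  -- doubling of the interval [w, t]
  let D := Dbl M w t
  let lift : M → D := fun z => ⟨(z, False), fun hf => hf.elim⟩
  let x' : Fin m → D := fun i => lift (x i)
  let y' : Fin m → D := fun i => lift (y i)
  have fDinf : ∀ u v : D, (u ⊓ v).1.1 = u.1.1 ⊓ v.1.1 := fun _ _ => rfl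
  have fDsup : ∀ u v : D, (u ⊔ v).1.1 = u.1.1 ⊔ v.1.1 := fun _ _ => rfl
  let p' : D := U.eval x'
  let q' : D := V.eval y'
  let c' : Fin n → D := fun j => (Us j).eval x' ⊓ (Vs j).eval y'
  let a' : D := R₁.eval c'
  let b' : D := R₂.eval c'
  have hp' : p'.1.1 = p := by
    show (U.eval x').1.1 = _
    rw [eval_map (fun u : D => u.1.1) fDinf fDsup x' U]
  have hq' : q'.1.1 = q := by
    show (V.eval y').1.1 = _
    rw [eval_map (fun u : D => u.1.1) fDinf fDsup y' V]
  have ha' : a'.1.1 = a := by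
    show (R₁.eval c').1.1 = _
    rw [eval_c_map (fun u : D => u.1.1) fDinf fDsup Us Vs x' y' R₁]
  have hb' : b'.1.1 = b := by
    show (R₂.eval c').1.1 = _
    rw [eval_c_map (fun u : D => u.1.1) fDinf fDsup Us Vs x' y' R₂]
  have hp'2 : ¬ p'.1.2 := fun h2 => hpt (hp' ▸ (p'.2 h2).2)
  have hq'2 : ¬ q'.1.2 := fun h2 => hqt (hq' ▸ (q'.2 h2).2)
  have ha'2 : ¬ a'.1.2 := fun h2 => hwa (ha' ▸ (a'.2 h2).1)
  have hb'2 : ¬ b'.1.2 := fun h2 => hwb (hb' ▸ (b'.2 h2).1)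
  -- apply the hypothesis in D
  have hD : p' ⊓ q' ≤ a' ⊔ b' := h D x' y'
  have hinfI : InI w t (p' ⊓ q').1.1 := by
    rw [Dbl.fst_inf, hp', hq']
    exact ⟨le_refl w, hwt⟩
  have hsupI : InI w t (a' ⊔ b').1.1 := by
    rw [Dbl.fst_sup, ha', hb']
    exact ⟨hwt, le_refl t⟩
  have hinf2 : (p' ⊓ q').1.2 := by
    rw [Dbl.snd_inf]
    refine ⟨by rw [hp', hq']; exact ⟨le_refl w, hwt⟩, fun hI => ?_, fun hI => ?_⟩
    · exact absurd (hp' ▸ hI.2) hpt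
    · exact absurd (hq' ▸ hI.2) hqt
  have hsup2 : (a' ⊔ b').1.2 := (hD.2 hinfI hsupI) hinf2
  rw [Dbl.snd_sup] at hsup2
  rcases hsup2.2 with ⟨hI, _⟩ | ⟨hI, _⟩
  · exact hwa (ha' ▸ hI.1)
  · exact hwb (hb' ▸ hI.1)

open LatTerm in
theorem main_lemma {m n : ℕ} (U V : LatTerm m) (Us Vs : Fin n → LatTerm m) :
    ∀ R : LatTerm n,
    (∀ (M : Type u) [Lattice M], ∀ x y : Fin m → M,
      U.eval x ⊓ V.eval y ≤ R.eval fun j => (Us j).eval x ⊓ (Vs j).eval y) →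
    ∃ (J : Finset (Fin n)) (hJ : J.Nonempty),
      (∀ (M : Type u) [Lattice M], ∀ v : Fin n → M, J.inf' hJ v ≤ R.eval v) ∧
      (∀ (M : Type u) [Lattice M], ∀ x y : Fin m → M,
        U.eval x ⊓ V.eval y ≤ J.inf' hJ fun j => (Us j).eval x ⊓ (Vs j).eval y)
  | .var i, h => by
      refine ⟨{i}, ⟨i, Finset.mem_singleton_self i⟩, ?_, ?_⟩
      · intro M _ v
        simp [LatTerm.eval]
      · intro M _ x y
        simpa [LatTerm.eval] using h M x y
  | .meet R₁ R₂, h => by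
      obtain ⟨J₁, hJ₁, hA₁, hB₁⟩ := main_lemma U V Us Vs R₁
        (fun M _ x y => (h M x y).trans inf_le_left)
      obtain ⟨J₂, hJ₂, hA₂, hB₂⟩ := main_lemma U V Us Vs R₂
        (fun M _ x y => (h M x y).trans inf_le_right)
      refine ⟨J₁ ∪ J₂, hJ₁.mono Finset.subset_union_left, ?_, ?_⟩
      · intro M _ v
        refine le_inf (le_trans ?_ (hA₁ M v)) (le_trans ?_ (hA₂ M v))
        · exact Finset.le_inf' _ _ fun b hb => Finset.inf'_le _ (Finset.mem_union_left _ hb)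
        · exact Finset.le_inf' _ _ fun b hb => Finset.inf'_le _ (Finset.mem_union_right _ hb)
      · intro M _ x y
        refine Finset.le_inf' _ _ fun j hj => ?_
        rcases Finset.mem_union.1 hj with hj | hj
        · exact (hB₁ M x y).trans (Finset.inf'_le _ hj)
        · exact (hB₂ M x y).trans (Finset.inf'_le _ hj)
  | .join R₁ R₂, h => by
      rcases join_split U V Us Vs R₁ R₂ h with h' | h'
      · obtain ⟨J, hJ, hA, hB⟩ := main_lemma U V Us Vs R₁ h'
        exact ⟨J, hJ, fun M _ v => (hA M v).trans le_sup_left, hB⟩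
      · obtain ⟨J, hJ, hA, hB⟩ := main_lemma U V Us Vs R₂ h'
        exact ⟨J, hJ, fun M _ v => (hA M v).trans le_sup_right, hB⟩

open LatTerm in
theorem exists_pure_meet_below {m n : ℕ} (hm : 0 < m) (hn : 0 < n)
    (U V : LatTerm m) (Us Vs : Fin n → LatTerm m) (R : LatTerm n)
    (h : ∀ (M : Type u) [Lattice M], ∀ x y : Fin m → M,
      U.eval x ⊓ V.eval y ≤ R.eval fun j => (Us j).eval x ⊓ (Vs j).eval y) :
    ∃ (J : Finset (Fin n)) (hJ : J.Nonempty),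
      (∀ (M : Type u) [Lattice M], ∀ v : Fin n → M, J.inf' hJ v ≤ R.eval v) ∧
      (∀ (M : Type u) [Lattice M], ∀ x y : Fin m → M,
        U.eval x ⊓ V.eval y ≤
          J.inf' hJ fun j => (Us j).eval x ⊓ (Vs j).eval y) :=
  main_lemma U V Us Vs R h
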